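/- Let G be a finite simple graph and let F be the family of all maximum independent (stable) sets of G. Then |⋂_{S∈F} S| + |⋃_{S∈F} S| ≥ 2·α(G), where α(G) is the independence number of G. -/

import Mathlib

open Finset
set_option linter.unusedSectionVars false

section Aux

variable {V : Type*} [Fintype V] [DecidableEq V] (G : SimpleGraph V) (α : ℕ)

open scoped Classical in
lemma aux_key (hmax : ∀ T : Finset V,
      (∀ v ∈ T, ∀ w ∈ T, v ≠ w → ¬ G.Adj v w) → T.card ≤ α)
    (S X : Finset V)
    (hS : ∀ v ∈ S, ∀ w ∈ S, v ≠ w → ¬ G.Adj v w) (hScard : S.card = α)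
    (hX : ∀ v ∈ X, ∀ w ∈ X, v ≠ w → ¬ G.Adj v w) (hXS : Disjoint X S) :
    X.card ≤ (S.filter (fun s => ∃ x ∈ X, G.Adj x s)).card := by
  classical
  set N := S.filter (fun s => ∃ x ∈ X, G.Adj x s) with hN
  have hNS : N ⊆ S := filter_subset _ _
  set T : Finset V := X ∪ (S \ N) with hT
  have hTindep : ∀ v ∈ T, ∀ w ∈ T, v ≠ w → ¬ G.Adj v w := by
    intro v hv w hw hvw hadj
    rw [hT, mem_union] at hv hw
    rcases hv with hv | hv <;> rcases hw with hw | hw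
    · exact hX v hv w hw hvw hadj
    · rw [mem_sdiff] at hw
      exact hw.2 (by rw [hN, mem_filter]; exact ⟨hw.1, v, hv, hadj⟩)
    · rw [mem_sdiff] at hv
      exact hv.2 (by rw [hN, mem_filter]; exact ⟨hv.1, w, hw, hadj.symm⟩)
    · exact hS v (mem_sdiff.mp hv).1 w (mem_sdiff.mp hw).1 hvw hadj
  have hTcard : T.card = X.card + (S.card - N.card) := by
    rw [hT, card_union_of_disjoint (hXS.mono_right (sdiff_subset)), card_sdiff_of_subset hNS]
  have hle : T.card ≤ α := hmax T hTindep
  have hNle : N.card ≤ S.card := card_le_card hNS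
  omega

/-- Main induction: for any nonempty family of maximum independent sets,
`|⋂| + |⋃| ≥ 2α`. -/
lemma aux_main (hmax : ∀ T : Finset V,
      (∀ v ∈ T, ∀ w ∈ T, v ≠ w → ¬ G.Adj v w) → T.card ≤ α)
    (𝒢 : Finset (Finset V)) (h𝒢 : 𝒢.Nonempty)
    (hmem : ∀ S ∈ 𝒢, (∀ v ∈ S, ∀ w ∈ S, v ≠ w → ¬ G.Adj v w) ∧ S.card = α) :
    2 * α ≤ (𝒢.inf' h𝒢 id).card + (𝒢.sup' h𝒢 id).card := by
  classical
  induction h𝒢 using Finset.Nonempty.cons_induction with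
  | singleton S =>
      simp only [inf'_singleton, sup'_singleton, id]
      have := (hmem S (mem_singleton_self S)).2
      omega
  | cons S 𝒢 hS h𝒢 ih =>
      have hmem' : ∀ T ∈ 𝒢, (∀ v ∈ T, ∀ w ∈ T, v ≠ w → ¬ G.Adj v w) ∧ T.card = α :=
        fun T hT => hmem T (mem_cons.mpr (Or.inr hT))
      have ih' := ih hmem'
      set I : Finset V := 𝒢.inf' h𝒢 id with hI
      set U : Finset V := 𝒢.sup' h𝒢 id with hU
      have hIcons : (cons S 𝒢 hS).inf' (cons_nonempty hS) id = S ∩ I := by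
        rw [hI, inf'_cons]; rfl
      have hUcons : (cons S 𝒢 hS).sup' (cons_nonempty hS) id = S ∪ U := by
        rw [hU, sup'_cons]; rfl
      rw [hIcons, hUcons]
      -- X = I \ S
      set X : Finset V := I \ S with hX
      have hSprop := hmem S (mem_cons.mpr (Or.inl rfl))
      -- I is contained in every member of 𝒢
      have hIsub : ∀ T ∈ 𝒢, I ⊆ T := fun T hT => inf'_le id hT
      obtain ⟨T0, hT0⟩ := h𝒢
      have hXindep : ∀ v ∈ X, ∀ w ∈ X, v ≠ w → ¬ G.Adj v w := by
        intro v hv w hw hvw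
        have h1 := hIsub T0 hT0 ((mem_sdiff.mp hv).1)
        have h2 := hIsub T0 hT0 ((mem_sdiff.mp hw).1)
        exact (hmem' T0 hT0).1 v h1 w h2 hvw
      have hXS : Disjoint X S := sdiff_disjoint
      have hkey := by
        classical
        exact aux_key G α hmax S X hSprop.1 hSprop.2 hXindep hXS
      -- neighbors of X in S are outside U
      have hNsub : S.filter (fun s => ∃ x ∈ X, G.Adj x s) ⊆ S \ U := by
        intro s hs
        rw [mem_filter] at hs
        obtain ⟨hsS, x, hx, hadj⟩ := hs
        rw [mem_sdiff]
        refine ⟨hsS, fun hsU => ?_⟩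
        rw [hU] at hsU
        replace hsU := (mem_sup' _).mp hsU
        obtain ⟨T, hT, hsT⟩ := hsU
        have hxT : x ∈ T := hIsub T hT (mem_sdiff.mp hx).1
        exact (hmem' T hT).1 x hxT s hsT (fun h => G.irrefl (h ▸ hadj)) hadj
      have hXle : X.card ≤ (S \ U).card := hkey.trans (card_le_card hNsub)
      have e1 : (I ∩ S).card + X.card = I.card := by
        rw [hX]; exact card_inter_add_card_sdiff I S
      have e2 : (S \ U).card + U.card = (S ∪ U).card := card_sdiff_add_card S U
      have e3 : (S ∩ I).card = (I ∩ S).card := by rw [inter_comm]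
      omega

end Aux

/-- For a finite simple graph `G` with independence number `α`,
the family `F` of all maximum independent sets satisfies
`|⋂ S ∈ F, S| + |⋃ S ∈ F, S| ≥ 2 α`. -/
theorem stmt_0 {V : Type*} [Fintype V] (G : SimpleGraph V) (α : ℕ)
    (hα : IsGreatest {n : ℕ | ∃ S : Finset V,
        (∀ v ∈ S, ∀ w ∈ S, v ≠ w → ¬ G.Adj v w) ∧ S.card = n} α) :
    2 * α ≤
      (⋂ S ∈ {S : Finset V | (∀ v ∈ S, ∀ w ∈ S, v ≠ w → ¬ G.Adj v w) ∧ S.card = α},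
          (S : Set V)).ncard +
      (⋃ S ∈ {S : Finset V | (∀ v ∈ S, ∀ w ∈ S, v ≠ w → ¬ G.Adj v w) ∧ S.card = α},
          (S : Set V)).ncard := by
  classical
  obtain ⟨⟨S0, hS0⟩, hub⟩ := hα
  have hmax : ∀ T : Finset V,
      (∀ v ∈ T, ∀ w ∈ T, v ≠ w → ¬ G.Adj v w) → T.card ≤ α :=
    fun T hT => hub ⟨T, hT, rfl⟩
  set 𝒢 : Finset (Finset V) :=
    Finset.univ.filter (fun S => (∀ v ∈ S, ∀ w ∈ S, v ≠ w → ¬ G.Adj v w) ∧ S.card = α)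
    with h𝒢def
  have hmem𝒢 : ∀ S : Finset V, S ∈ 𝒢 ↔
      ((∀ v ∈ S, ∀ w ∈ S, v ≠ w → ¬ G.Adj v w) ∧ S.card = α) := by
    intro S; simp [h𝒢def]
  have h𝒢ne : 𝒢.Nonempty := ⟨S0, (hmem𝒢 S0).mpr hS0⟩
  have hmain := aux_main G α hmax 𝒢 h𝒢ne (fun S hS => (hmem𝒢 S).mp hS)
  have hIeq : (⋂ S ∈ {S : Finset V |
        (∀ v ∈ S, ∀ w ∈ S, v ≠ w → ¬ G.Adj v w) ∧ S.card = α}, (S : Set V)) =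
      ((𝒢.inf' h𝒢ne id : Finset V) : Set V) := by
    ext x
    simp only [Set.mem_iInter, Set.mem_setOf_eq, Finset.coe_inf', Finset.mem_coe,
      Finset.mem_inf', id]
    constructor
    · intro h T hT; exact h T ((hmem𝒢 T).mp hT)
    · intro h T hT; exact h T ((hmem𝒢 T).mpr hT)
  have hUeq : (⋃ S ∈ {S : Finset V |
        (∀ v ∈ S, ∀ w ∈ S, v ≠ w → ¬ G.Adj v w) ∧ S.card = α}, (S : Set V)) =
      ((𝒢.sup' h𝒢ne id : Finset V) : Set V) := by
    ext x
    simp only [Set.mem_iUnion, Set.mem_setOf_eq, Finset.mem_coe, Finset.mem_sup']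
    constructor
    · rintro ⟨T, hT, hx⟩; exact ⟨T, (hmem𝒢 T).mpr hT, hx⟩
    · rintro ⟨T, hT, hx⟩; exact ⟨T, (hmem𝒢 T).mp hT, hx⟩
  rw [hIeq, hUeq, Set.ncard_coe_finset, Set.ncard_coe_finset]
  exact hmain
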